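/- Every temporally stratified program is locally stratified: if the time-abstracted program P′ obtained from a temporal program P (by deleting all object arguments and keeping only the time argument of each atom) is locally stratified via strata B′₁, B′₂, …, then P itself is locally stratified by the strata B₁, B₂, … where a ground atom p(x, t) is placed in Bᵢ iff the abstracted atom p(t) lies in B′ᵢ. -/

import Mathlib

/-- A temporal rule: each atom is a predicate together with a time offset `k`,
standing for `p(X, T − k)`, with one time variable `T` per rule. -/
structure TRule (Pred : Type) where
  head : Pred × ℤ
  pos : List (Pred × ℤ)
  neg : List (Pred × ℤ)

/-- A ground temporal rule: ground temporal atoms are triples of a predicate,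
a tuple of object constants, and a time-point. -/
structure TGroundRule (Pred Const : Type) where
  head : Pred × List Const × ℤ
  pos : List (Pred × List Const × ℤ)
  neg : List (Pred × List Const × ℤ)

/-- `g` is a ground instance of the temporal rule `r` at evaluation time `t`:
the predicates and time-points of all atoms match those prescribed by `r` with `T := t`
(object arguments are instantiated arbitrarily). -/
def IsTGroundInstance {Pred Const : Type} (r : TRule Pred) (t : ℤ)
    (g : TGroundRule Pred Const) : Prop :=
  g.head.1 = r.head.1 ∧ g.head.2.2 = t - r.head.2 ∧
  g.pos.map (fun a => (a.1, a.2.2)) = r.pos.map (fun pk => (pk.1, t - pk.2)) ∧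
  g.neg.map (fun a => (a.1, a.2.2)) = r.neg.map (fun pk => (pk.1, t - pk.2))

/-- `lam` is a local stratification of the temporal program `P`: for every ground instance,
positive body atoms lie in strata ≤ the head's stratum and negated body atoms strictly below. -/
def IsTLocalStrat {Pred Const : Type} (P : Set (TRule Pred))
    (lam : Pred × List Const × ℤ → ℕ) : Prop :=
  ∀ r ∈ P, ∀ t : ℤ, ∀ g : TGroundRule Pred Const, IsTGroundInstance r t g →
    (∀ a ∈ g.pos, lam a ≤ lam g.head) ∧ (∀ a ∈ g.neg, lam a < lam g.head)

/-- `lam'` is a local stratification of the time abstraction `P′` of `P` (each atom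
`p(X, τ)` replaced by the unary atom `p(τ)`). -/
def IsAbstractLocalStrat {Pred : Type} (P : Set (TRule Pred)) (lam' : Pred × ℤ → ℕ) : Prop :=
  ∀ r ∈ P, ∀ t : ℤ,
    (∀ pk ∈ r.pos, lam' (pk.1, t - pk.2) ≤ lam' (r.head.1, t - r.head.2)) ∧
    (∀ pk ∈ r.neg, lam' (pk.1, t - pk.2) < lam' (r.head.1, t - r.head.2))

/-- Every temporally stratified program is locally stratified: if the time abstraction `P′`
of `P` is locally stratified via `lam'`, then placing each ground atom `p(x, τ)` in the
stratum of the abstracted atom `p(τ)` yields a local stratification of `P`. -/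
theorem temporally_stratified_implies_locally_stratified
    (Pred Const : Type) (P : Set (TRule Pred)) (lam' : Pred × ℤ → ℕ)
    (h : IsAbstractLocalStrat P lam') :
    IsTLocalStrat (Const := Const) P (fun a => lam' (a.1, a.2.2)) := by
  intro r hr t g hg
  obtain ⟨hh1, hh2, hp, hn⟩ := hg
  have hhead : (g.head.1, g.head.2.2) = (r.head.1, t - r.head.2) := by
    simp [hh1, hh2]
  constructor
  · intro a ha
    have : (a.1, a.2.2) ∈ r.pos.map (fun pk => (pk.1, t - pk.2)) := by
      rw [← hp]; exact List.mem_map_of_mem (f := fun a => (a.1, a.2.2)) ha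
    obtain ⟨pk, hpk, heq⟩ := List.mem_map.mp this
    simp only [hhead, ← heq]
    exact (h r hr t).1 pk hpk
  · intro a ha
    have : (a.1, a.2.2) ∈ r.neg.map (fun pk => (pk.1, t - pk.2)) := by
      rw [← hn]; exact List.mem_map_of_mem (f := fun a => (a.1, a.2.2)) ha
    obtain ⟨pk, hpk, heq⟩ := List.mem_map.mp this
    simp only [hhead, ← heq]
    exact (h r hr t).2 pk hpk
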